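/- Let $n \geq 3$, $\beta > 0$, $\gamma > 1$ with $\beta\gamma < n$, and suppose $p\frac{n-\beta\gamma}{\gamma-1} - \sigma_2 = n$. Let $u : \mathbb{R}^n \to [0,\infty)$ be measurable with $u(y) \leq C_0 |y|^{-\frac{n-\beta\gamma}{\gamma-1}}$ for $|y| \geq 1$ and $|y|^{\sigma_2} u^p \in L^1(B_1(0))$. Then for $\lambda \in (1/2, 1)$ and $|x|$ sufficiently large, $\int_0^{\lambda|x|} \left( \frac{\int_{B_t(x)} |y|^{\sigma_2} u(y)^p \, dy}{t^{n-\beta\gamma}} \right)^{\frac{1}{\gamma-1}} \frac{dt}{t} \leq C |x|^{-\frac{n-\beta\gamma}{\gamma-1}}$, and in particular this quantity is $o\left(|x|^{-\frac{n-\beta\gamma}{\gamma-1}} (\ln|x|)^{\frac{1}{\gamma-1}}\right)$ as $|x| \to \infty$. -/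

import Mathlib

open MeasureTheory Metric

set_option maxHeartbeats 2000000 in
theorem stmt16 (n : ℕ) (hn : 3 ≤ n) (β γ p σ₂ C₀ : ℝ) (hβ : 0 < β) (hγ : 1 < γ)
    (hβγ : β * γ < n) (hp : 0 < p) (hC₀ : 0 < C₀)
    (hcrit : p * (((n : ℝ) - β * γ) / (γ - 1)) - σ₂ = n)
    (u : EuclideanSpace ℝ (Fin n) → ℝ) (hmeas : Measurable u) (hnn : ∀ y, 0 ≤ u y)
    (hdecay : ∀ y : EuclideanSpace ℝ (Fin n), 1 ≤ ‖y‖ →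
      u y ≤ C₀ * ‖y‖ ^ (-((n : ℝ) - β * γ) / (γ - 1)))
    (hloc : IntegrableOn (fun y : EuclideanSpace ℝ (Fin n) => ‖y‖ ^ σ₂ * u y ^ p)
      (ball (0 : EuclideanSpace ℝ (Fin n)) 1) volume) :
    ∀ lam : ℝ, 1 / 2 < lam → lam < 1 →
      (∃ C : ℝ, 0 < C ∧ ∃ R : ℝ, 0 < R ∧ ∀ x : EuclideanSpace ℝ (Fin n), R ≤ ‖x‖ →
        (∫⁻ t in Set.Ioc (0 : ℝ) (lam * ‖x‖),
            ENNReal.ofReal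
              (((∫ y in ball x t, ‖y‖ ^ σ₂ * u y ^ p)
                  / t ^ ((n : ℝ) - β * γ)) ^ (1 / (γ - 1)) / t))
          ≤ ENNReal.ofReal (C * ‖x‖ ^ (-((n : ℝ) - β * γ) / (γ - 1)))) ∧
      (∀ ε : ℝ, 0 < ε → ∃ R : ℝ, 0 < R ∧ ∀ x : EuclideanSpace ℝ (Fin n), R ≤ ‖x‖ →
        (∫⁻ t in Set.Ioc (0 : ℝ) (lam * ‖x‖),
            ENNReal.ofReal
              (((∫ y in ball x t, ‖y‖ ^ σ₂ * u y ^ p)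
                  / t ^ ((n : ℝ) - β * γ)) ^ (1 / (γ - 1)) / t))
          ≤ ENNReal.ofReal
              (ε * ‖x‖ ^ (-((n : ℝ) - β * γ) / (γ - 1))
                * (Real.log ‖x‖) ^ (1 / (γ - 1)))) := by
  intro lam hlam1 hlam2
  have hγ1 : (0:ℝ) < γ - 1 := by linarith
  have hnβγ : (0:ℝ) < (n : ℝ) - β * γ := by linarith
  have hlam0 : (0:ℝ) < lam := by linarith
  have h1lam : (0:ℝ) < 1 - lam := by linarith
  haveI : Nontrivial (EuclideanSpace ℝ (Fin n)) := by
    haveI : Nonempty (Fin n) := Fin.pos_iff_nonempty.mp (by omega)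
    infer_instance
  obtain ⟨α, hαdef⟩ : ∃ a : ℝ, a = ((n : ℝ) - β * γ) / (γ - 1) := ⟨_, rfl⟩
  have hα : 0 < α := hαdef ▸ div_pos hnβγ hγ1
  have hcrit' : p * α - σ₂ = n := by rw [hαdef]; exact hcrit
  obtain ⟨δ, hδdef⟩ : ∃ d : ℝ, d = β * γ / (γ - 1) := ⟨_, rfl⟩
  have hδ : 0 < δ := hδdef ▸ div_pos (by positivity) hγ1
  obtain ⟨V, hVdef⟩ : ∃ v : ℝ, v = (volume (ball (0 : EuclideanSpace ℝ (Fin n)) 1)).toReal :=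
    ⟨_, rfl⟩
  have hV : 0 < V := by
    rw [hVdef]
    exact ENNReal.toReal_pos (measure_ball_pos volume 0 one_pos).ne' measure_ball_lt_top.ne
  obtain ⟨A, hAdef⟩ : ∃ a : ℝ, a = (C₀ ^ p * (1 - lam) ^ (-(n : ℝ)) * V) ^ (1 / (γ - 1)) :=
    ⟨_, rfl⟩
  have hA : 0 < A := by
    rw [hAdef]
    apply Real.rpow_pos_of_pos
    have h1 : (0:ℝ) < C₀ ^ p := Real.rpow_pos_of_pos hC₀ _
    have h2 : (0:ℝ) < (1 - lam) ^ (-(n : ℝ)) := Real.rpow_pos_of_pos h1lam _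
    positivity
  obtain ⟨C, hCdef⟩ : ∃ c : ℝ, c = A * lam ^ δ / δ := ⟨_, rfl⟩
  have hlamδ : (0:ℝ) < lam ^ δ := Real.rpow_pos_of_pos hlam0 _
  have hC : 0 < C := by rw [hCdef]; positivity
  obtain ⟨R, hRdef⟩ : ∃ r : ℝ, r = 1 / (1 - lam) := ⟨_, rfl⟩
  have hR : 0 < R := by rw [hRdef]; positivity
  have main : ∀ x : EuclideanSpace ℝ (Fin n), R ≤ ‖x‖ →
      (∫⁻ t in Set.Ioc (0 : ℝ) (lam * ‖x‖),
          ENNReal.ofReal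
            (((∫ y in ball x t, ‖y‖ ^ σ₂ * u y ^ p)
                / t ^ ((n : ℝ) - β * γ)) ^ (1 / (γ - 1)) / t))
        ≤ ENNReal.ofReal (C * ‖x‖ ^ (-((n : ℝ) - β * γ) / (γ - 1))) := by
    intro x hx
    have hx0 : 0 < ‖x‖ := lt_of_lt_of_le hR hx
    have hx1 : 1 ≤ (1 - lam) * ‖x‖ := by
      rw [hRdef, div_le_iff₀ h1lam] at hx
      nlinarith
    have hT0 : 0 < lam * ‖x‖ := by positivity
    obtain ⟨Cpt, hCpt⟩ : ∃ c : ℝ, c = C₀ ^ p * ((1 - lam) * ‖x‖) ^ (-(n : ℝ)) := ⟨_, rfl⟩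
    have hCpt0 : 0 < Cpt := by
      rw [hCpt]
      have h1 : (0:ℝ) < C₀ ^ p := Real.rpow_pos_of_pos hC₀ _
      have h2 : (0:ℝ) < ((1 - lam) * ‖x‖) ^ (-(n : ℝ)) := Real.rpow_pos_of_pos (by positivity) _
      positivity
    obtain ⟨K, hK⟩ : ∃ k : ℝ, k = Cpt * V := ⟨_, rfl⟩
    have hK0 : 0 < K := by rw [hK]; positivity
    obtain ⟨M, hM⟩ : ∃ m : ℝ, m = K ^ (1 / (γ - 1)) := ⟨_, rfl⟩
    have hM0 : 0 < M := by rw [hM]; exact Real.rpow_pos_of_pos hK0 _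
    have key : ∀ t ∈ Set.Ioc (0:ℝ) (lam * ‖x‖),
        ((∫ y in ball x t, ‖y‖ ^ σ₂ * u y ^ p) / t ^ ((n : ℝ) - β * γ)) ^ (1 / (γ - 1)) / t
          ≤ M * t ^ (δ - 1) := by
      rintro t ⟨ht0, htT⟩
      have hIb : (∫ y in ball x t, ‖y‖ ^ σ₂ * u y ^ p) ≤ K * t ^ ((n : ℝ)) := by
        have hpt : ∀ y ∈ ball x t, ‖(‖y‖ ^ σ₂ * u y ^ p : ℝ)‖ ≤ Cpt := by
          intro y hy
          have hdy : dist y x < t := mem_ball.mp hy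
          have hylb : (1 - lam) * ‖x‖ ≤ ‖y‖ := by
            have h2 : ‖x‖ - ‖y‖ ≤ dist y x := by
              rw [dist_eq_norm]
              calc ‖x‖ - ‖y‖ ≤ ‖x - y‖ := by
                    have := norm_sub_norm_le x y; linarith
                _ = ‖y - x‖ := norm_sub_rev x y
            nlinarith
          have hy1 : 1 ≤ ‖y‖ := le_trans hx1 hylb
          have hy0 : 0 < ‖y‖ := lt_of_lt_of_le one_pos hy1
          have hub : u y ^ p ≤ C₀ ^ p * ‖y‖ ^ ((-α) * p) := by
            have hd := hdecay y hy1
            rw [neg_div, ← hαdef] at hd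
            calc u y ^ p ≤ (C₀ * ‖y‖ ^ (-α)) ^ p := Real.rpow_le_rpow (hnn y) hd hp.le
              _ = C₀ ^ p * (‖y‖ ^ (-α)) ^ p :=
                  Real.mul_rpow hC₀.le (Real.rpow_nonneg hy0.le _)
              _ = C₀ ^ p * ‖y‖ ^ ((-α) * p) := by rw [← Real.rpow_mul hy0.le]
          have hnonneg : (0:ℝ) ≤ ‖y‖ ^ σ₂ * u y ^ p := by
            have h1 := Real.rpow_nonneg hy0.le σ₂
            have h2 := Real.rpow_nonneg (hnn y) p
            positivity
          rw [Real.norm_of_nonneg hnonneg]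
          have hchain : ‖y‖ ^ σ₂ * u y ^ p ≤ C₀ ^ p * ‖y‖ ^ (-(n : ℝ)) := by
            calc ‖y‖ ^ σ₂ * u y ^ p ≤ ‖y‖ ^ σ₂ * (C₀ ^ p * ‖y‖ ^ ((-α) * p)) :=
                  mul_le_mul_of_nonneg_left hub (Real.rpow_nonneg hy0.le _)
              _ = C₀ ^ p * (‖y‖ ^ σ₂ * ‖y‖ ^ ((-α) * p)) := by ring
              _ = C₀ ^ p * ‖y‖ ^ (σ₂ + (-α) * p) := by rw [← Real.rpow_add hy0]
              _ = C₀ ^ p * ‖y‖ ^ (-(n : ℝ)) := by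
                  rw [show σ₂ + (-α) * p = -(n : ℝ) by linarith]
          refine hchain.trans ?_
          rw [hCpt]
          have hle : ‖y‖ ^ (-(n : ℝ)) ≤ ((1 - lam) * ‖x‖) ^ (-(n : ℝ)) :=
            Real.rpow_le_rpow_of_nonpos (by positivity) hylb
              (neg_nonpos.mpr (Nat.cast_nonneg n))
          exact mul_le_mul_of_nonneg_left hle (Real.rpow_pos_of_pos hC₀ _).le
        have hvol : (volume (ball x t)).toReal = t ^ (n : ℕ) * V := by
          rw [Measure.addHaar_ball _ _ ht0.le, finrank_euclideanSpace_fin,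
            ENNReal.toReal_mul, ENNReal.toReal_ofReal (by positivity), hVdef]
        have hb := norm_setIntegral_le_of_norm_le_const (μ := volume) (s := ball x t)
          measure_ball_lt_top hpt
        have hb2 : (∫ y in ball x t, ‖y‖ ^ σ₂ * u y ^ p) ≤ Cpt * (t ^ (n : ℕ) * V) := by
          rw [← hvol]
          exact le_trans (le_abs_self _) hb
        calc (∫ y in ball x t, ‖y‖ ^ σ₂ * u y ^ p) ≤ Cpt * (t ^ (n : ℕ) * V) := hb2
          _ = K * t ^ ((n : ℝ)) := by
              rw [hK, ← Real.rpow_natCast t n]; ring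
      have hInn : 0 ≤ ∫ y in ball x t, ‖y‖ ^ σ₂ * u y ^ p := by
        apply setIntegral_nonneg measurableSet_ball
        intro y _
        have h1 := Real.rpow_nonneg (norm_nonneg y) σ₂
        have h2 := Real.rpow_nonneg (hnn y) p
        positivity
      have htn : 0 < t ^ ((n : ℝ) - β * γ) := Real.rpow_pos_of_pos ht0 _
      have hsplit : t ^ ((n : ℝ)) = t ^ (β * γ) * t ^ ((n : ℝ) - β * γ) := by
        rw [← Real.rpow_add ht0]
        congr 1
        ring
      have h2 : (∫ y in ball x t, ‖y‖ ^ σ₂ * u y ^ p) / t ^ ((n : ℝ) - β * γ)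
          ≤ K * t ^ (β * γ) := by
        rw [div_le_iff₀ htn]
        calc (∫ y in ball x t, ‖y‖ ^ σ₂ * u y ^ p) ≤ K * t ^ ((n : ℝ)) := hIb
          _ = K * t ^ (β * γ) * t ^ ((n : ℝ) - β * γ) := by rw [hsplit]; ring
      have h3 : ((∫ y in ball x t, ‖y‖ ^ σ₂ * u y ^ p) / t ^ ((n : ℝ) - β * γ)) ^ (1 / (γ - 1))
          ≤ (K * t ^ (β * γ)) ^ (1 / (γ - 1)) :=
        Real.rpow_le_rpow (div_nonneg hInn htn.le) h2 (by positivity)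
      have h4 : (K * t ^ (β * γ)) ^ (1 / (γ - 1)) = M * t ^ δ := by
        rw [Real.mul_rpow hK0.le (Real.rpow_nonneg ht0.le _), ← Real.rpow_mul ht0.le,
          mul_one_div, hM, hδdef]
      calc ((∫ y in ball x t, ‖y‖ ^ σ₂ * u y ^ p) / t ^ ((n : ℝ) - β * γ)) ^ (1 / (γ - 1)) / t
          ≤ (M * t ^ δ) / t := div_le_div_of_nonneg_right (h3.trans h4.le) ht0.le
        _ = M * t ^ (δ - 1) := by
            rw [mul_div_assoc, Real.rpow_sub_one ht0.ne']
    have hmeasg : Measurable fun t : ℝ => ENNReal.ofReal (M * t ^ (δ - 1)) :=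
      (measurable_const.mul (measurable_id.pow_const (δ - 1))).ennreal_ofReal
    have hint : IntegrableOn (fun t : ℝ => M * t ^ (δ - 1)) (Set.Ioc (0:ℝ) (lam * ‖x‖)) := by
      have h1 : IntervalIntegrable (fun t : ℝ => t ^ (δ - 1)) volume 0 (lam * ‖x‖) :=
        intervalIntegral.intervalIntegrable_rpow' (by linarith)
      rw [intervalIntegrable_iff_integrableOn_Ioc_of_le hT0.le] at h1
      exact h1.const_mul M
    have hae : 0 ≤ᵐ[volume.restrict (Set.Ioc (0:ℝ) (lam * ‖x‖))]
        fun t : ℝ => M * t ^ (δ - 1) := by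
      filter_upwards [ae_restrict_mem measurableSet_Ioc] with t ht
      have := Real.rpow_nonneg ht.1.le (δ - 1)
      positivity
    have hval : ∫ t in Set.Ioc (0:ℝ) (lam * ‖x‖), M * t ^ (δ - 1)
        = M * ((lam * ‖x‖) ^ δ / δ) := by
      rw [← intervalIntegral.integral_of_le hT0.le, intervalIntegral.integral_const_mul,
        integral_rpow (Or.inl (by linarith : (-1:ℝ) < δ - 1))]
      rw [sub_add_cancel, Real.zero_rpow hδ.ne', sub_zero]
    have hfinal : M * ((lam * ‖x‖) ^ δ / δ) = C * ‖x‖ ^ (-((n : ℝ) - β * γ) / (γ - 1)) := by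
      have e1 : K = (C₀ ^ p * (1 - lam) ^ (-(n : ℝ)) * V) * ‖x‖ ^ (-(n : ℝ)) := by
        rw [hK, hCpt, Real.mul_rpow h1lam.le hx0.le]; ring
      have e2 : M = A * ‖x‖ ^ ((-(n : ℝ)) * (1 / (γ - 1))) := by
        have hprod : (0:ℝ) ≤ C₀ ^ p * (1 - lam) ^ (-(n : ℝ)) * V := by
          have h1 : (0:ℝ) < C₀ ^ p := Real.rpow_pos_of_pos hC₀ _
          have h2 : (0:ℝ) < (1 - lam) ^ (-(n : ℝ)) := Real.rpow_pos_of_pos h1lam _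
          positivity
        rw [hM, e1, Real.mul_rpow hprod (Real.rpow_nonneg hx0.le _), hAdef,
          ← Real.rpow_mul hx0.le]
      have e3 : (lam * ‖x‖) ^ δ = lam ^ δ * ‖x‖ ^ δ := Real.mul_rpow hlam0.le hx0.le
      have eexp : (-(n : ℝ)) * (1 / (γ - 1)) + δ = -((n : ℝ) - β * γ) / (γ - 1) := by
        rw [hδdef]
        field_simp
        ring
      have e4 : ‖x‖ ^ ((-(n : ℝ)) * (1 / (γ - 1))) * ‖x‖ ^ δ
          = ‖x‖ ^ (-((n : ℝ) - β * γ) / (γ - 1)) := by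
        rw [← Real.rpow_add hx0, eexp]
      rw [e2, e3, hCdef, ← e4]
      ring
    refine le_trans
      (setLIntegral_mono hmeasg (fun t ht => ENNReal.ofReal_le_ofReal (key t ht))) ?_
    rw [← ofReal_integral_eq_lintegral_ofReal hint hae, hval, hfinal]
  refine ⟨⟨C, hC, R, hR, main⟩, ?_⟩
  intro ε hε
  refine ⟨max R (Real.exp ((C / ε) ^ (γ - 1))), lt_of_lt_of_le hR (le_max_left _ _), ?_⟩
  intro x hx
  have hxR : R ≤ ‖x‖ := le_trans (le_max_left _ _) hx
  have hx0 : 0 < ‖x‖ := lt_of_lt_of_le hR hxR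
  refine le_trans (main x hxR) (ENNReal.ofReal_le_ofReal ?_)
  have hxe : Real.exp ((C / ε) ^ (γ - 1)) ≤ ‖x‖ := le_trans (le_max_right _ _) hx
  have hL : (C / ε) ^ (γ - 1) ≤ Real.log ‖x‖ := by
    have := Real.log_le_log (Real.exp_pos _) hxe
    rwa [Real.log_exp] at this
  have hCε : (0:ℝ) ≤ C / ε := by positivity
  have hL2 : C / ε ≤ (Real.log ‖x‖) ^ (1 / (γ - 1)) := by
    calc C / ε = ((C / ε) ^ (γ - 1)) ^ (1 / (γ - 1)) := by
          rw [one_div, Real.rpow_rpow_inv hCε (by linarith : γ - 1 ≠ 0)]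
      _ ≤ (Real.log ‖x‖) ^ (1 / (γ - 1)) :=
          Real.rpow_le_rpow (Real.rpow_nonneg hCε _) hL (by positivity)
  have hCle : C ≤ ε * (Real.log ‖x‖) ^ (1 / (γ - 1)) := by
    rw [div_le_iff₀ hε] at hL2
    linarith [hL2]
  have hXnn : (0:ℝ) ≤ ‖x‖ ^ (-((n : ℝ) - β * γ) / (γ - 1)) := Real.rpow_nonneg hx0.le _
  nlinarith [mul_le_mul_of_nonneg_right hCle hXnn]
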